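/- arXiv:1912.08959 — 4 statements merged into one kernel-verified Lean document; each statement's English description precedes it below -/
import Mathlib

section
/- Let w : ℤ → ℂ satisfy w(n+1)·w(n)·w(n-1) = 1 for all n, with w(n) ≠ 0 for all n. Define K(x,y) = (x²y² + x + y)/(xy). Then K(w(n+1), w(n)) = K(w(n), w(n-1)) for all n. -/
/-- Invariant of the autonomous q-Painlevé I recurrence w(n+1)·w(n)·w(n-1) = 1. -/
theorem stmt0 (w : ℤ → ℂ) (hne : ∀ n, w n ≠ 0)
    (h : ∀ n : ℤ, w (n + 1) * w n * w (n - 1) = 1)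
    (K : ℂ → ℂ → ℂ)
    (hK : ∀ x y, K x y = (x ^ 2 * y ^ 2 + x + y) / (x * y)) :
    ∀ n : ℤ, K (w (n + 1)) (w n) = K (w n) (w (n - 1)) := by
  intro n
  rw [hK, hK]
  have ha := hne (n + 1)
  have hb := hne n
  have hc := hne (n - 1)
  have hrec := h n
  field_simp
  linear_combination (w n) * (w (n + 1) - w (n - 1)) * hrec
end

section
/- Let w : ℤ → ℂ be a nonvanishing sequence satisfying w(n+1)·w(n-1) = 1/w(n) − 1/(z·w(n)²) where z = a·qⁿ (a, q ≠ 0), and suppose w(n) ≠ 1/z. Define K(x,y) = (x²y² + x + y)/(xy). Then K(w(n+1), w(n)) − K(w(n), w(n-1)) = −(1/z)·w(n)·(w(n+1) − w(n-1))/(w(n) − 1/z). -/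
/-- Variation of the autonomous invariant K along trajectories of q-Painlevé I. -/
theorem stmt1 (a q : ℂ) (ha : a ≠ 0) (hq : q ≠ 0) (w : ℤ → ℂ)
    (hne : ∀ n, w n ≠ 0)
    (heq : ∀ n : ℤ, w (n + 1) * w (n - 1) =
      1 / w n - 1 / (a * q ^ n * (w n) ^ 2))
    (hne2 : ∀ n : ℤ, w n ≠ 1 / (a * q ^ n))
    (K : ℂ → ℂ → ℂ)
    (hK : ∀ x y, K x y = (x ^ 2 * y ^ 2 + x + y) / (x * y)) :
    ∀ n : ℤ, K (w (n + 1)) (w n) - K (w n) (w (n - 1)) =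
      -(1 / (a * q ^ n)) * w n * (w (n + 1) - w (n - 1)) /
        (w n - 1 / (a * q ^ n)) := by
  intro n
  set z := a * q ^ n with hzdef
  have hz : z ≠ 0 := mul_ne_zero ha (zpow_ne_zero n hq)
  set u := w (n + 1) with hu
  set v := w n with hv
  set x := w (n - 1) with hx
  have hun : u ≠ 0 := hne _
  have hvn : v ≠ 0 := hne _
  have hxn : x ≠ 0 := hne _
  have key : u * x = 1 / v - 1 / (z * v ^ 2) := heq n
  have hd : v - 1 / z ≠ 0 := sub_ne_zero.mpr (hne2 n)
  clear_value z u v x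
  have key2 : u * x * z * v ^ 2 = z * v - 1 := by
    field_simp at key
    apply mul_left_cancel₀ hvn
    linear_combination v * key
  rw [hK, hK]
  rw [div_sub_div _ _ (mul_ne_zero hun hvn) (mul_ne_zero hvn hxn), div_eq_div_iff
    (mul_ne_zero (mul_ne_zero hun hvn) (mul_ne_zero hvn hxn)) hd]
  field_simp
  ring_nf
  ring_nf at key2
  linear_combination v * (u - x) * key2
end

section
/- There is no nonzero polynomial first integral of the first Painlevé equation: there exist no polynomials Q₁, …, Qₙ ∈ ℂ[t, w] (n ≥ 1) such that every solution w of w'' = 6w² + t satisfies (w')ⁿ + Q₁(t,w)(w')ⁿ⁻¹ + ⋯ + Qₙ(t,w) = 0 identically on its domain. -/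
open Finset

noncomputable def pc (b : ℂ) : ℕ → ℂ
  | 0 => 0
  | 1 => b
  | (k+2) =>
    (6 * ∑ i ∈ (Finset.range (k+1)).attach, pc b i.1 * pc b (k - i.1)
      + (if k = 1 then 1 else 0)) / (((k:ℂ)+1)*((k:ℂ)+2))
decreasing_by
  · have := Finset.mem_range.mp i.2; omega
  · omega

lemma pc_rec (b : ℂ) (k : ℕ) :
    ((k:ℂ)+1) * ((k:ℂ)+2) * pc b (k+2)
      = 6 * ∑ i ∈ Finset.range (k+1), pc b i * pc b (k - i)
        + (if k = 1 then 1 else 0) := by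
  have h1 : ((k:ℂ)+1) ≠ 0 := Nat.cast_add_one_ne_zero k
  have h2 : ((k:ℂ)+2) ≠ 0 := by
    have : (((k+2:ℕ)):ℂ) ≠ 0 := Nat.cast_ne_zero.mpr (by omega)
    push_cast at this; exact this
  rw [pc]
  rw [Finset.sum_attach (Finset.range (k+1)) (fun i => pc b i * pc b (k - i))]
  field_simp

lemma pc_bound (b : ℂ) (k : ℕ) : ‖pc b k‖ ≤ (max ‖b‖ 3)^k := by
  set A := max ‖b‖ 3 with hA
  have hA3 : (3:ℝ) ≤ A := le_max_right _ _
  have hA1 : (1:ℝ) ≤ A := by linarith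
  have hA0 : (0:ℝ) ≤ A := by linarith
  induction k using Nat.strong_induction_on with
  | _ k ih =>
    match k with
    | 0 => simp [pc]
    | 1 => simp only [pc, pow_one, hA]; exact le_max_left _ _
    | (k+2) =>
      have hrec := pc_rec b k
      have hs : ‖∑ i ∈ Finset.range (k+1), pc b i * pc b (k - i)‖ ≤ ((k:ℝ)+1)*A^k := by
        refine (norm_sum_le _ _).trans ?_
        have hterm : ∀ i ∈ Finset.range (k+1), ‖pc b i * pc b (k - i)‖ ≤ A^k := by
          intro i hi
          have hik := Finset.mem_range.mp hi
          have h1 : ‖pc b i‖ ≤ A^i := ih i (by omega)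
          have h2 : ‖pc b (k-i)‖ ≤ A^(k-i) := ih (k-i) (by omega)
          calc ‖pc b i * pc b (k - i)‖ ≤ A^i * A^(k-i) := by
                rw [norm_mul]
                exact mul_le_mul h1 h2 (norm_nonneg _) (pow_nonneg hA0 _)
            _ = A^k := by rw [← pow_add]; congr 1; omega
        calc (∑ i ∈ Finset.range (k+1), ‖pc b i * pc b (k - i)‖)
            ≤ ∑ _i ∈ Finset.range (k+1), A^k := Finset.sum_le_sum hterm
          _ = ((k:ℝ)+1)*A^k := by
              rw [Finset.sum_const, Finset.card_range, nsmul_eq_mul]; push_cast; ring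
      have hnum : ‖6 * ∑ i ∈ Finset.range (k+1), pc b i * pc b (k - i)
          + (if k = 1 then (1:ℂ) else 0)‖ ≤ 6*((k:ℝ)+1)*A^k + 1 := by
        refine (norm_add_le _ _).trans ?_
        have hd : ‖(if k = 1 then (1:ℂ) else 0)‖ ≤ 1 := by split <;> simp
        have h6 : ‖(6:ℂ)‖ = 6 := by norm_num
        rw [norm_mul, h6]
        nlinarith [hs, norm_nonneg (∑ i ∈ Finset.range (k+1), pc b i * pc b (k - i))]
      have hden : ‖((k:ℂ)+1) * ((k:ℂ)+2)‖ = ((k:ℝ)+1)*((k:ℝ)+2) := by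
        rw [norm_mul]
        have e1 : ((k:ℂ)+1) = ((k+1 : ℕ) : ℂ) := by push_cast; ring
        have e2 : ((k:ℂ)+2) = ((k+2 : ℕ) : ℂ) := by push_cast; ring
        rw [e1, e2, Complex.norm_natCast, Complex.norm_natCast]
        push_cast; ring
      have key : ((k:ℝ)+1)*((k:ℝ)+2) * ‖pc b (k+2)‖ ≤ 6*((k:ℝ)+1)*A^k + 1 := by
        calc ((k:ℝ)+1)*((k:ℝ)+2) * ‖pc b (k+2)‖
            = ‖((k:ℂ)+1) * ((k:ℂ)+2) * pc b (k+2)‖ := by rw [norm_mul, hden]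
          _ ≤ 6*((k:ℝ)+1)*A^k + 1 := by rw [hrec]; exact hnum
      have hpk : (1:ℝ) ≤ A^k := one_le_pow₀ hA1
      have hk2 : (0:ℝ) ≤ (k:ℝ) := Nat.cast_nonneg k
      have hk1 : (1:ℝ) ≤ (k:ℝ)+1 := by linarith
      have hA9 : (9:ℝ) ≤ A*A := by nlinarith
      have epow : A^(k+2) = A^k * (A*A) := by ring
      have step : 6*((k:ℝ)+1)*A^k + 1 ≤ ((k:ℝ)+1)*((k:ℝ)+2)*(A^k*(A*A)) := by
        have t1 : (1:ℝ) ≤ 12*((k:ℝ)+1)*A^k := by nlinarith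
        have t2 : 18*((k:ℝ)+1)*A^k ≤ 9*(((k:ℝ)+1)*((k:ℝ)+2))*A^k := by
          nlinarith [mul_nonneg (mul_nonneg (by linarith : (0:ℝ) ≤ 9*((k:ℝ)+1))
            (by linarith : (0:ℝ) ≤ (k:ℝ))) (pow_nonneg hA0 k)]
        have t3 : 9*(((k:ℝ)+1)*((k:ℝ)+2))*A^k ≤ ((k:ℝ)+1)*((k:ℝ)+2)*(A^k*(A*A)) := by
          nlinarith [mul_nonneg (mul_nonneg
            (by positivity : (0:ℝ) ≤ ((k:ℝ)+1)*((k:ℝ)+2)) (pow_nonneg hA0 k))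
            (by linarith : (0:ℝ) ≤ A*A - 9)]
        linarith
      have hpos : (0:ℝ) < ((k:ℝ)+1)*((k:ℝ)+2) := by positivity
      rw [epow]
      have := key.trans step
      exact (mul_le_mul_iff_right₀ hpos).mp this

noncomputable def pA (b : ℂ) : ℝ := max ‖b‖ 3
noncomputable def pr (b : ℂ) : ℝ := 1/(2 * pA b)

lemma pA_pos (b : ℂ) : 0 < pA b := lt_of_lt_of_le (by norm_num) (le_max_right _ _)
lemma pA_one (b : ℂ) : 1 ≤ pA b := le_trans (by norm_num) (le_max_right _ _)
lemma pr_pos (b : ℂ) : 0 < pr b := by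
  have := pA_pos b; unfold pr; positivity
lemma pA_mul_pr (b : ℂ) : pA b * pr b = 1/2 := by
  have := (pA_pos b).ne'
  unfold pr; field_simp

lemma pc_mul_pow_bound (b : ℂ) {t : ℂ} (ht : ‖t‖ ≤ pr b) (m j : ℕ) (hjm : j ≤ m) :
    ‖pc b m * t^j‖ ≤ (pA b)^(m-j) * (1/2:ℝ)^j := by
  have hA0 := (pA_pos b).le
  have hr0 := (pr_pos b).le
  rw [norm_mul, norm_pow]
  calc ‖pc b m‖ * ‖t‖^j ≤ (pA b)^m * (pr b)^j := by
        exact mul_le_mul (pc_bound b m) (pow_le_pow_left₀ (norm_nonneg t) ht j)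
          (pow_nonneg (norm_nonneg t) j) (pow_nonneg hA0 m)
    _ = (pA b)^(m-j) * ((pA b * pr b)^j) := by
        rw [mul_pow, ← mul_assoc, ← pow_add]; congr 2; omega
    _ = (pA b)^(m-j) * (1/2:ℝ)^j := by rw [pA_mul_pr]

lemma norm_k1 (k : ℕ) : ‖((k:ℂ)+1)‖ = (k:ℝ)+1 := by
  have : ((k:ℂ)+1) = (((k+1:ℕ)):ℂ) := by push_cast; ring
  rw [this, Complex.norm_natCast]; push_cast; ring

lemma norm_k2 (k : ℕ) : ‖((k:ℂ)+2)‖ = (k:ℝ)+2 := by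
  have : ((k:ℂ)+2) = (((k+2:ℕ)):ℂ) := by push_cast; ring
  rw [this, Complex.norm_natCast]; push_cast; ring

lemma summable_poly_geom (a c d : ℝ) :
    Summable (fun k : ℕ => a*((k:ℝ)^2*(1/2:ℝ)^k) + c*((k:ℝ)*(1/2:ℝ)^k) + d*(1/2:ℝ)^k) := by
  have h : ‖(1/2:ℝ)‖ < 1 := by rw [Real.norm_eq_abs, abs_of_pos] <;> norm_num
  have h2 : Summable (fun k : ℕ => (k:ℝ)^2*(1/2:ℝ)^k) := by
    simpa using summable_pow_mul_geometric_of_norm_lt_one 2 h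
  have h1 : Summable (fun k : ℕ => (k:ℝ)*(1/2:ℝ)^k) := by
    simpa using summable_pow_mul_geometric_of_norm_lt_one 1 h
  have h0 : Summable (fun k : ℕ => (1/2:ℝ)^k) := by
    simpa using summable_pow_mul_geometric_of_norm_lt_one 0 h
  exact ((h2.mul_left a).add (h1.mul_left c)).add (h0.mul_left d)

noncomputable def pw (b : ℂ) (t : ℂ) : ℂ := ∑' k, pc b k * t^k
noncomputable def pdw (b : ℂ) (t : ℂ) : ℂ := ∑' (k : ℕ), ((k:ℂ)+1) * pc b (k+1) * t^k

lemma summable_norm_pw (b : ℂ) {t : ℂ} (ht : ‖t‖ ≤ pr b) :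
    Summable (fun k : ℕ => ‖pc b k * t^k‖) := by
  refine Summable.of_nonneg_of_le (fun k => norm_nonneg _) (fun k => ?_)
    (summable_poly_geom 0 0 1)
  have h := pc_mul_pow_bound b ht k k le_rfl
  simp only [Nat.sub_self, pow_zero, one_mul] at h
  calc ‖pc b k * t^k‖ ≤ (1/2:ℝ)^k := h
    _ = 0*((k:ℝ)^2*(1/2:ℝ)^k) + 0*((k:ℝ)*(1/2:ℝ)^k) + 1*(1/2:ℝ)^k := by ring

lemma summable_pw (b : ℂ) {t : ℂ} (ht : ‖t‖ ≤ pr b) :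
    Summable (fun k : ℕ => pc b k * t^k) := (summable_norm_pw b ht).of_norm

lemma summable_pddw (b : ℂ) {t : ℂ} (ht : ‖t‖ ≤ pr b) :
    Summable (fun k : ℕ => (((k:ℂ)+1)*((k:ℂ)+2)) * pc b (k+2) * t^k) := by
  refine Summable.of_norm (Summable.of_nonneg_of_le (fun k => norm_nonneg _) (fun k => ?_)
    (summable_poly_geom ((pA b)^2) (3*(pA b)^2) (2*(pA b)^2)))
  have hb := pc_mul_pow_bound b ht (k+2) k (by omega)
  have h2 : (k+2) - k = 2 := by omega
  rw [h2] at hb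
  have hnn : (0:ℝ) ≤ ((k:ℝ)+1)*((k:ℝ)+2) := by positivity
  have e : ‖(((k:ℂ)+1)*((k:ℂ)+2)) * pc b (k+2) * t^k‖
      = ((k:ℝ)+1)*((k:ℝ)+2) * ‖pc b (k+2) * t^k‖ := by
    rw [mul_assoc, norm_mul, norm_mul, norm_k1, norm_k2]
  rw [e]
  calc ((k:ℝ)+1)*((k:ℝ)+2) * ‖pc b (k+2) * t^k‖
      ≤ ((k:ℝ)+1)*((k:ℝ)+2) * ((pA b)^2 * (1/2:ℝ)^k) :=
        mul_le_mul_of_nonneg_left hb hnn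
    _ = (pA b)^2*((k:ℝ)^2*(1/2:ℝ)^k) + 3*(pA b)^2*((k:ℝ)*(1/2:ℝ)^k) + 2*(pA b)^2*(1/2:ℝ)^k := by
        ring

lemma summable_pdw (b : ℂ) {t : ℂ} (ht : ‖t‖ ≤ pr b) :
    Summable (fun k : ℕ => ((k:ℂ)+1) * pc b (k+1) * t^k) := by
  have hsum : Summable (fun k : ℕ => pA b*((k:ℝ)*(1/2:ℝ)^k) + pA b*(1/2:ℝ)^k) :=
    (summable_poly_geom 0 (pA b) (pA b)).congr (fun k => by ring)
  refine Summable.of_norm (Summable.of_nonneg_of_le (fun k => norm_nonneg _) (fun k => ?_) hsum)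
  have hb := pc_mul_pow_bound b ht (k+1) k (by omega)
  have h1 : (k+1) - k = 1 := by omega
  rw [h1, pow_one] at hb
  have e : ‖((k:ℂ)+1) * pc b (k+1) * t^k‖ = ((k:ℝ)+1) * ‖pc b (k+1) * t^k‖ := by
    rw [mul_assoc, norm_mul, norm_k1]
  rw [e]
  calc ((k:ℝ)+1) * ‖pc b (k+1) * t^k‖ ≤ ((k:ℝ)+1) * (pA b * (1/2:ℝ)^k) :=
        mul_le_mul_of_nonneg_left hb (by positivity)
    _ = pA b*((k:ℝ)*(1/2:ℝ)^k) + pA b*(1/2:ℝ)^k := by ring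

lemma pw_hasDeriv (b : ℂ) {t : ℂ} (ht : t ∈ Metric.ball (0:ℂ) (pr b)) :
    HasDerivAt (pw b) (pdw b t) t := by
  have hu : Summable (fun k : ℕ => 2*(pA b)*((k:ℝ)*(1/2:ℝ)^k)) :=
    (summable_poly_geom 0 (2*(pA b)) 0).congr (fun k => by ring)
  have hg' : ∀ (n : ℕ) (y : ℂ), y ∈ Metric.ball (0:ℂ) (pr b) →
      ‖pc b n * ((n:ℂ) * y^(n-1))‖ ≤ 2*(pA b)*((n:ℝ)*(1/2:ℝ)^n) := by
    intro n y hy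
    have hyr : ‖y‖ ≤ pr b := (mem_ball_zero_iff.mp hy).le
    match n with
    | 0 => simp
    | (m+1) =>
      have hb := pc_mul_pow_bound b hyr (m+1) m (by omega)
      have h1 : (m+1) - m = 1 := by omega
      rw [h1, pow_one] at hb
      have e : ‖pc b (m+1) * (((m+1:ℕ):ℂ) * y^((m+1)-1))‖
          = ((m:ℝ)+1) * ‖pc b (m+1) * y^m‖ := by
        rw [show (m+1)-1 = m from rfl]
        rw [show pc b (m+1) * (((m+1:ℕ):ℂ) * y^m) = ((m+1:ℕ):ℂ) * (pc b (m+1) * y^m) by ring]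
        rw [norm_mul, Complex.norm_natCast]; push_cast; ring
      rw [e]
      calc ((m:ℝ)+1) * ‖pc b (m+1) * y^m‖ ≤ ((m:ℝ)+1) * (pA b * (1/2:ℝ)^m) :=
            mul_le_mul_of_nonneg_left hb (by positivity)
        _ = 2*(pA b)*(((m+1:ℕ):ℝ)*(1/2:ℝ)^(m+1)) := by push_cast; ring
  have h0 : (0:ℂ) ∈ Metric.ball (0:ℂ) (pr b) := Metric.mem_ball_self (pr_pos b)
  have hg0 : Summable (fun n : ℕ => pc b n * (0:ℂ)^n) := summable_pw b (by simp [(pr_pos b).le])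
  have H := hasDerivAt_tsum_of_isPreconnected hu Metric.isOpen_ball
    (convex_ball (0:ℂ) (pr b)).isPreconnected
    (fun n y _ => (hasDerivAt_pow n y).const_mul (pc b n)) hg' h0 hg0 ht
  have hs : Summable (fun n : ℕ => pc b n * ((n:ℂ) * t^(n-1))) :=
    Summable.of_norm_bounded hu (fun n => hg' n t ht)
  have e2 : (∑' (n : ℕ), pc b n * ((n:ℂ) * t^(n-1))) = pdw b t := by
    rw [Summable.tsum_eq_zero_add hs]
    simp only [Nat.cast_zero, zero_mul, mul_zero, zero_add]
    exact tsum_congr (fun n => by push_cast; ring)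
  rw [← e2]
  exact H

lemma pdw_hasDeriv (b : ℂ) {t : ℂ} (ht : t ∈ Metric.ball (0:ℂ) (pr b)) :
    HasDerivAt (pdw b) (∑' (k : ℕ), (((k:ℂ)+1)*((k:ℂ)+2)) * pc b (k+2) * t^k) t := by
  have hu : Summable (fun k : ℕ => 2*(pA b)^2*((k:ℝ)^2*(1/2:ℝ)^k) + 2*(pA b)^2*((k:ℝ)*(1/2:ℝ)^k)) :=
    (summable_poly_geom (2*(pA b)^2) (2*(pA b)^2) 0).congr (fun k => by ring)
  have hg' : ∀ (n : ℕ) (y : ℂ), y ∈ Metric.ball (0:ℂ) (pr b) →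
      ‖((n:ℂ)+1) * pc b (n+1) * ((n:ℂ) * y^(n-1))‖
        ≤ 2*(pA b)^2*((n:ℝ)^2*(1/2:ℝ)^n) + 2*(pA b)^2*((n:ℝ)*(1/2:ℝ)^n) := by
    intro n y hy
    have hyr : ‖y‖ ≤ pr b := (mem_ball_zero_iff.mp hy).le
    match n with
    | 0 => simp
    | (m+1) =>
      have hb := pc_mul_pow_bound b hyr (m+2) m (by omega)
      have h1 : (m+2) - m = 2 := by omega
      rw [h1] at hb
      have e : ‖(((m+1:ℕ):ℂ)+1) * pc b (m+1+1) * (((m+1:ℕ):ℂ) * y^((m+1)-1))‖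
          = ((m:ℝ)+2) * (((m:ℝ)+1) * ‖pc b (m+2) * y^m‖) := by
        rw [show (m+1)-1 = m from rfl, show m+1+1 = m+2 from rfl]
        rw [show (((m+1:ℕ):ℂ)+1) * pc b (m+2) * (((m+1:ℕ):ℂ) * y^m)
          = ((((m+1:ℕ):ℂ)+1)) * (((m+1:ℕ):ℂ) * (pc b (m+2) * y^m)) by ring]
        rw [norm_mul, norm_mul, Complex.norm_natCast]
        have : ‖(((m+1:ℕ):ℂ)+1)‖ = ((m+1:ℕ):ℝ)+1 := by
          rw [show (((m+1:ℕ):ℂ)+1) = (((m+2:ℕ)):ℂ) by push_cast; ring, Complex.norm_natCast]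
          push_cast; ring
        rw [this]; push_cast; ring
      rw [e]
      have step : ((m:ℝ)+1) * ‖pc b (m+2) * y^m‖ ≤ ((m:ℝ)+1) * ((pA b)^2 * (1/2:ℝ)^m) :=
        mul_le_mul_of_nonneg_left hb (by positivity)
      calc ((m:ℝ)+2) * (((m:ℝ)+1) * ‖pc b (m+2) * y^m‖)
          ≤ ((m:ℝ)+2) * (((m:ℝ)+1) * ((pA b)^2 * (1/2:ℝ)^m)) :=
            mul_le_mul_of_nonneg_left step (by positivity)
        _ = 2*(pA b)^2*(((m+1:ℕ):ℝ)^2*(1/2:ℝ)^(m+1)) + 2*(pA b)^2*(((m+1:ℕ):ℝ)*(1/2:ℝ)^(m+1)) := by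
            push_cast; ring
  have h0 : (0:ℂ) ∈ Metric.ball (0:ℂ) (pr b) := Metric.mem_ball_self (pr_pos b)
  have hg0 : Summable (fun n : ℕ => ((n:ℂ)+1) * pc b (n+1) * (0:ℂ)^n) :=
    summable_pdw b (by simp [(pr_pos b).le])
  have H := hasDerivAt_tsum_of_isPreconnected hu Metric.isOpen_ball
    (convex_ball (0:ℂ) (pr b)).isPreconnected
    (fun n y _ => (hasDerivAt_pow n y).const_mul (((n:ℂ)+1) * pc b (n+1))) hg' h0 hg0 ht
  have hs : Summable (fun n : ℕ => ((n:ℂ)+1) * pc b (n+1) * ((n:ℂ) * t^(n-1))) :=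
    Summable.of_norm_bounded hu (fun n => hg' n t ht)
  have e2 : (∑' (n : ℕ), ((n:ℂ)+1) * pc b (n+1) * ((n:ℂ) * t^(n-1)))
      = ∑' (k : ℕ), (((k:ℂ)+1)*((k:ℂ)+2)) * pc b (k+2) * t^k := by
    rw [Summable.tsum_eq_zero_add hs]
    simp only [Nat.cast_zero, zero_mul, mul_zero, zero_add]
    exact tsum_congr (fun n => by push_cast; ring)
  rw [← e2]
  exact H

lemma pddw_eq (b : ℂ) {t : ℂ} (ht : ‖t‖ ≤ pr b) :
    (∑' (k : ℕ), (((k:ℂ)+1)*((k:ℂ)+2)) * pc b (k+2) * t^k) = 6*(pw b t)^2 + t := by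
  have hnorm := summable_norm_pw b ht
  -- Cauchy product
  have hc : (pw b t) * (pw b t)
      = ∑' (n : ℕ), ∑ k ∈ Finset.range (n+1), (pc b k * t^k) * (pc b (n-k) * t^(n-k)) :=
    tsum_mul_tsum_eq_tsum_sum_range_of_summable_norm hnorm hnorm
  have hinner : ∀ n : ℕ, (∑ k ∈ Finset.range (n+1), (pc b k * t^k) * (pc b (n-k) * t^(n-k)))
      = (∑ k ∈ Finset.range (n+1), pc b k * pc b (n-k)) * t^n := by
    intro n
    rw [Finset.sum_mul]
    refine Finset.sum_congr rfl (fun k hk => ?_)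
    have hkn : k ≤ n := Nat.lt_succ_iff.mp (Finset.mem_range.mp hk)
    have : t^k * t^(n-k) = t^n := by rw [← pow_add]; congr 1; omega
    calc (pc b k * t^k) * (pc b (n-k) * t^(n-k)) = pc b k * pc b (n-k) * (t^k * t^(n-k)) := by ring
      _ = pc b k * pc b (n-k) * t^n := by rw [this]
  have hsq : (pw b t) * (pw b t) = ∑' (n : ℕ), (∑ k ∈ Finset.range (n+1), pc b k * pc b (n-k)) * t^n := by
    rw [hc]; exact tsum_congr hinner
  -- summabilities
  have hSddw := summable_pddw b ht
  have hdelta : Summable (fun n : ℕ => (if n = 1 then (1:ℂ) else 0) * t^n) := by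
    apply summable_of_ne_finset_zero (s := {1})
    intro n hn
    simp only [Finset.mem_singleton] at hn
    simp [hn]
  have hmain : Summable (fun n : ℕ => 6 * ((∑ k ∈ Finset.range (n+1), pc b k * pc b (n-k)) * t^n)) := by
    have : (fun n : ℕ => 6 * ((∑ k ∈ Finset.range (n+1), pc b k * pc b (n-k)) * t^n))
        = fun n : ℕ => (((n:ℂ)+1)*((n:ℂ)+2)) * pc b (n+2) * t^n - (if n = 1 then (1:ℂ) else 0) * t^n := by
      funext n
      have := pc_rec b n
      rw [show (((n:ℂ)+1)*((n:ℂ)+2)) * pc b (n+2) * t^n = ((((n:ℂ)+1)*((n:ℂ)+2)) * pc b (n+2)) * t^n from rfl,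
        this]
      ring
    rw [this]
    exact hSddw.sub hdelta
  -- main computation
  calc (∑' (k : ℕ), (((k:ℂ)+1)*((k:ℂ)+2)) * pc b (k+2) * t^k)
      = ∑' (n : ℕ), (6 * ((∑ k ∈ Finset.range (n+1), pc b k * pc b (n-k)) * t^n)
          + (if n = 1 then (1:ℂ) else 0) * t^n) := by
        refine tsum_congr (fun n => ?_)
        rw [show (((n:ℂ)+1)*((n:ℂ)+2)) * pc b (n+2) * t^n = ((((n:ℂ)+1)*((n:ℂ)+2)) * pc b (n+2)) * t^n from rfl,
          pc_rec b n]
        ring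
    _ = (∑' (n : ℕ), 6 * ((∑ k ∈ Finset.range (n+1), pc b k * pc b (n-k)) * t^n))
        + ∑' (n : ℕ), (if n = 1 then (1:ℂ) else 0) * t^n := Summable.tsum_add hmain hdelta
    _ = 6*(pw b t)^2 + t := by
        rw [tsum_mul_left, ← hsq]
        congr 1
        · ring
        · rw [tsum_eq_single 1 (fun n hn => by simp [hn])]
          simp

lemma pw_zero (b : ℂ) : pw b 0 = 0 := by
  unfold pw
  rw [tsum_eq_single 0 (fun n hn => by simp [zero_pow hn])]
  simp [pc]

lemma pdw_zero (b : ℂ) : pdw b 0 = b := by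
  unfold pdw
  rw [tsum_eq_single 0 (fun n hn => by simp [zero_pow hn])]
  simp [pc]

/-- The first Painlevé equation w'' = 6w² + t has no polynomial first
integral: no relation (w')ⁿ + Q₁(t,w)(w')ⁿ⁻¹ + ⋯ + Qₙ(t,w) = 0 holds for all
of its solutions. Variables of the two-variable polynomials: X 0 ↦ t, X 1 ↦ w. -/
theorem stmt9 :
    ¬ ∃ (n : ℕ) (_ : 1 ≤ n) (Q : Fin n → MvPolynomial (Fin 2) ℂ),
      ∀ (U : Set ℂ), IsOpen U → IsPreconnected U → U.Nonempty →
        ∀ w dw : ℂ → ℂ,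
          (∀ t ∈ U, HasDerivAt w (dw t) t) →
          (∀ t ∈ U, HasDerivAt dw (6 * (w t) ^ 2 + t) t) →
          ∀ t ∈ U,
            (dw t) ^ n +
              ∑ i : Fin n,
                MvPolynomial.eval ![t, w t] (Q i) * (dw t) ^ (n - 1 - (i : ℕ))
            = 0 := by
  rintro ⟨n, hn, Q, H⟩
  set q : Fin n → ℂ := fun i => MvPolynomial.eval ![0, 0] (Q i) with hq
  have key : ∀ b : ℂ, b^n + ∑ i : Fin n, q i * b^(n - 1 - (i:ℕ)) = 0 := by
    intro b
    have h0 : (0:ℂ) ∈ Metric.ball (0:ℂ) (pr b) := Metric.mem_ball_self (pr_pos b)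
    have hw : ∀ t ∈ Metric.ball (0:ℂ) (pr b), HasDerivAt (pw b) (pdw b t) t :=
      fun t ht => pw_hasDeriv b ht
    have hdw : ∀ t ∈ Metric.ball (0:ℂ) (pr b), HasDerivAt (pdw b) (6 * (pw b t)^2 + t) t := by
      intro t ht
      have := pdw_hasDeriv b ht
      rwa [pddw_eq b (mem_ball_zero_iff.mp ht).le] at this
    have h := H (Metric.ball (0:ℂ) (pr b)) Metric.isOpen_ball
      (convex_ball (0:ℂ) (pr b)).isPreconnected ⟨0, h0⟩ (pw b) (pdw b) hw hdw 0 h0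
    rw [pdw_zero, pw_zero] at h
    exact h
  -- build the polynomial
  set P : Polynomial ℂ :=
    Polynomial.X^n + ∑ i : Fin n, Polynomial.C (q i) * Polynomial.X^(n - 1 - (i:ℕ)) with hP
  have hPeval : ∀ b : ℂ, P.eval b = 0 := by
    intro b
    rw [hP]
    simp only [Polynomial.eval_add, Polynomial.eval_pow, Polynomial.eval_X,
      Polynomial.eval_finset_sum, Polynomial.eval_mul, Polynomial.eval_C]
    exact key b
  have hP0 : P = 0 := Polynomial.funext (fun b => by rw [hPeval b]; simp)
  have hcoeff : P.coeff n = 1 := by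
    rw [hP]
    rw [Polynomial.coeff_add, Polynomial.coeff_X_pow, if_pos rfl]
    rw [Polynomial.finset_sum_coeff]
    have : ∀ i : Fin n, (Polynomial.C (q i) * Polynomial.X^(n - 1 - (i:ℕ))).coeff n = 0 := by
      intro i
      rw [Polynomial.coeff_C_mul, Polynomial.coeff_X_pow, if_neg (by omega), mul_zero]
    rw [Finset.sum_congr rfl (fun i _ => this i)]
    simp
  rw [hP0] at hcoeff
  simp at hcoeff
end

section
/- If w is a meromorphic solution of w'' = 6w² + t with a pole at t₀, then the pole is a double pole and the Laurent expansion begins w(t) = (t−t₀)⁻² + O((t−t₀)²); moreover the coefficient of (t−t₀)⁻¹ and the constant term both vanish, and the coefficient of (t−t₀)² equals −t₀/10. -/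
open Finset

namespace PIaux

/-- coefficients with summable norms at every radius below r -/
def Good (a : ℕ → ℂ) (r : ℝ) : Prop :=
  ∀ ρ : ℝ, 0 < ρ → ρ < r → Summable fun k => ‖a k‖ * ρ ^ k

lemma good_of_bounds {a : ℕ → ℂ} {r : ℝ}
    (h : ∀ ρ : ℝ, 0 < ρ → ρ < r → ∃ C, ∀ k, ‖a k‖ * ρ ^ k ≤ C) : Good a r := by
  intro ρ hρ hρr
  obtain ⟨ρ', h1, h2⟩ : ∃ ρ', ρ < ρ' ∧ ρ' < r := ⟨(ρ + r)/2, by linarith, by linarith⟩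
  have hρ'0 : 0 < ρ' := by linarith
  obtain ⟨C, hC⟩ := h ρ' hρ'0 h2
  have hsplit : ρ = ρ' * (ρ / ρ') := by field_simp
  have hx0 : (0:ℝ) ≤ ρ / ρ' := div_nonneg hρ.le hρ'0.le
  have hx1 : ρ / ρ' < 1 := by rw [div_lt_one hρ'0]; exact h1
  have hgeom : Summable fun k : ℕ => C * (ρ / ρ') ^ k :=
    (summable_geometric_of_lt_one hx0 hx1).mul_left C
  refine Summable.of_nonneg_of_le (fun k => by positivity) (fun k => ?_) hgeom
  have hne : ρ' ≠ 0 := hρ'0.ne'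
  calc ‖a k‖ * ρ ^ k = (‖a k‖ * ρ' ^ k) * (ρ / ρ') ^ k := by
        rw [div_pow]; field_simp
    _ ≤ C * (ρ / ρ') ^ k := mul_le_mul_of_nonneg_right (hC k) (by positivity)

lemma Good.bound {a : ℕ → ℂ} {r : ℝ} (ha : Good a r) {ρ : ℝ} (hρ : 0 < ρ) (hρr : ρ < r) :
    ∃ C : ℝ, 0 ≤ C ∧ ∀ k, ‖a k‖ * ρ ^ k ≤ C := by
  refine ⟨∑' k, ‖a k‖ * ρ ^ k, tsum_nonneg fun k => by positivity, fun k => ?_⟩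
  exact Summable.le_tsum (ha ρ hρ hρr) k (fun j _ => by positivity)

lemma Good.summable {a : ℕ → ℂ} {r : ℝ} (ha : Good a r) (hr : 0 < r) {z : ℂ}
    (hz : ‖z‖ < r) : Summable fun k => a k * z ^ k := by
  obtain ⟨ρ, h1, h2⟩ : ∃ ρ, ‖z‖ < ρ ∧ ρ < r :=
    ⟨(‖z‖ + r)/2, by have := norm_nonneg z; constructor <;> linarith⟩
  have h0 : 0 ≤ ‖z‖ := norm_nonneg z
  refine Summable.of_norm (Summable.of_nonneg_of_le (fun k => norm_nonneg _)
    (fun k => ?_) (ha ρ (by linarith) h2))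
  rw [norm_mul, norm_pow]
  exact mul_le_mul_of_nonneg_left (pow_le_pow_left₀ h0 h1.le k) (norm_nonneg _)

lemma Good.deriv {a : ℕ → ℂ} {r : ℝ} (hr : 0 < r) (ha : Good a r) :
    Good (fun k => ((k:ℂ) + 1) * a (k + 1)) r := by
  intro ρ hρ hρr
  obtain ⟨ρ', h1, h2⟩ : ∃ ρ', ρ < ρ' ∧ ρ' < r := ⟨(ρ + r)/2, by linarith, by linarith⟩
  have hρ'0 : 0 < ρ' := by linarith
  obtain ⟨C, hC0, hC⟩ := ha.bound hρ'0 h2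
  have hx1 : ρ / ρ' < 1 := by rw [div_lt_one hρ'0]; exact h1
  have hx0 : (0:ℝ) ≤ ρ / ρ' := div_nonneg hρ.le hρ'0.le
  have hsplit : ρ = ρ' * (ρ / ρ') := by field_simp
  have hgeom : Summable fun k : ℕ => (C / ρ') * (((k:ℝ) + 1) * (ρ / ρ') ^ k) := by
    refine Summable.mul_left _ ?_
    have h3 : Summable fun k : ℕ => (k:ℝ) * (ρ/ρ') ^ k := by
      simpa using summable_pow_mul_geometric_of_norm_lt_one (R := ℝ) 1
        (by rwa [Real.norm_eq_abs, abs_of_nonneg hx0])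
    have h4 : Summable fun k : ℕ => (ρ/ρ') ^ k := summable_geometric_of_lt_one hx0 hx1
    simpa [add_mul] using h3.add h4
  refine Summable.of_nonneg_of_le (fun k => by positivity) (fun k => ?_) hgeom
  have hnorm : ‖((k:ℂ) + 1) * a (k + 1)‖ = ((k:ℝ) + 1) * ‖a (k+1)‖ := by
    rw [norm_mul]
    congr 1
    have h5 : ((k:ℂ) + 1) = ((k+1 : ℕ) : ℂ) := by push_cast; ring
    rw [h5, Complex.norm_natCast]; push_cast; ring
  rw [hnorm]
  have key : ‖a (k+1)‖ * ρ ^ k ≤ (C / ρ') * (ρ/ρ')^k := by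
    rw [div_mul_eq_mul_div, le_div_iff₀ hρ'0]
    have hne : ρ' ≠ 0 := hρ'0.ne'
    calc ‖a (k+1)‖ * ρ ^ k * ρ' = (‖a (k+1)‖ * ρ' ^ (k+1)) * (ρ/ρ')^k := by
          rw [div_pow]; field_simp; ring
      _ ≤ C * (ρ/ρ')^k := mul_le_mul_of_nonneg_right (hC (k+1)) (by positivity)
  calc ((k:ℝ) + 1) * ‖a (k+1)‖ * ρ ^ k = ((k:ℝ)+1) * (‖a (k+1)‖ * ρ ^ k) := by ring
    _ ≤ ((k:ℝ)+1) * ((C / ρ') * (ρ/ρ')^k) :=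
        mul_le_mul_of_nonneg_left key (by positivity)
    _ = (C / ρ') * (((k:ℝ) + 1) * (ρ / ρ') ^ k) := by ring


lemma hasDerivAt_psum {a : ℕ → ℂ} {r : ℝ} (hr : 0 < r) (ha : Good a r) {z : ℂ}
    (hz : ‖z‖ < r) :
    HasDerivAt (fun y => ∑' (k : ℕ), a k * y ^ k)
      (∑' (k : ℕ), ((k:ℂ) + 1) * a (k + 1) * z ^ k) z := by
  obtain ⟨ρ, h1, h2⟩ : ∃ ρ, ‖z‖ < ρ ∧ ρ < r :=
    ⟨(‖z‖ + r)/2, by have := norm_nonneg z; constructor <;> linarith⟩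
  have hρ0 : 0 < ρ := lt_of_le_of_lt (norm_nonneg z) h1
  obtain ⟨ρ', h3, h4⟩ : ∃ ρ', ρ < ρ' ∧ ρ' < r := ⟨(ρ + r)/2, by constructor <;> linarith⟩
  have hρ'0 : 0 < ρ' := by linarith
  obtain ⟨C, hC0, hC⟩ := ha.bound hρ'0 h4
  have hx0 : (0:ℝ) ≤ ρ/ρ' := by positivity
  have hx1 : ρ/ρ' < 1 := by rw [div_lt_one hρ'0]; exact h3
  have hCgeom : ∀ k, ‖a k‖ * ρ ^ k ≤ C * (ρ/ρ')^k := by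
    intro k
    have hne : ρ' ≠ 0 := hρ'0.ne'
    calc ‖a k‖ * ρ ^ k = (‖a k‖ * ρ' ^ k) * (ρ / ρ') ^ k := by
          rw [div_pow]; field_simp
      _ ≤ C * (ρ / ρ') ^ k := mul_le_mul_of_nonneg_right (hC k) (by positivity)
  set u : ℕ → ℝ := fun k => (k:ℝ)/ρ * (C * (ρ/ρ')^k) with hu_def
  have hu : Summable u := by
    have h5 : Summable fun k : ℕ => (k:ℝ) * (ρ/ρ')^k := by
      simpa using summable_pow_mul_geometric_of_norm_lt_one (R := ℝ) 1
        (by rwa [Real.norm_eq_abs, abs_of_nonneg hx0])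
    refine Summable.congr (h5.mul_left (C/ρ)) fun k => ?_
    simp only [hu_def]; ring
  have hderiv : ∀ n : ℕ, ∀ y ∈ Metric.ball (0:ℂ) ρ,
      HasDerivAt (fun w : ℂ => a n * w ^ n) (a n * ((n:ℂ) * y^(n-1))) y :=
    fun n y _ => (hasDerivAt_pow n y).const_mul (a n)
  have hbound : ∀ n : ℕ, ∀ y ∈ Metric.ball (0:ℂ) ρ,
      ‖a n * ((n:ℂ) * y^(n-1))‖ ≤ u n := by
    intro n y hy
    have hyρ : ‖y‖ ≤ ρ := by
      rw [Metric.mem_ball, dist_zero_right] at hy; exact hy.le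
    match n with
    | 0 => simp [hu_def]
    | Nat.succ m =>
      have hcast : ‖((m:ℂ) + 1)‖ = (m:ℝ) + 1 := by
        have h5 : ((m:ℂ) + 1) = ((m+1 : ℕ) : ℂ) := by push_cast; ring
        rw [h5, Complex.norm_natCast]; push_cast; ring
      have hstep : ‖a (m+1) * (((m:ℕ)+1:ℂ) * y^m)‖ = ‖a (m+1)‖ * (((m:ℝ)+1) * ‖y‖^m) := by
        rw [norm_mul, norm_mul, norm_pow, hcast]
      calc ‖a (m+1) * ((((m+1):ℕ):ℂ) * y^(m+1-1))‖
          = ‖a (m+1)‖ * (((m:ℝ)+1) * ‖y‖^m) := by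
            rw [show ((m+1:ℕ):ℂ) = (m:ℂ)+1 by push_cast; ring, Nat.add_sub_cancel, hstep]
        _ ≤ ‖a (m+1)‖ * (((m:ℝ)+1) * ρ^m) := by
            refine mul_le_mul_of_nonneg_left ?_ (norm_nonneg _)
            exact mul_le_mul_of_nonneg_left (pow_le_pow_left₀ (norm_nonneg y) hyρ m)
              (by positivity)
        _ = (((m:ℝ)+1)/ρ) * (‖a (m+1)‖ * ρ^(m+1)) := by
            rw [pow_succ]; field_simp
        _ ≤ (((m:ℝ)+1)/ρ) * (C * (ρ/ρ')^(m+1)) :=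
            mul_le_mul_of_nonneg_left (hCgeom (m+1)) (by positivity)
        _ = u (m+1) := by simp only [hu_def]; push_cast; ring
  have h0mem : (0:ℂ) ∈ Metric.ball (0:ℂ) ρ := by simpa [Metric.mem_ball] using hρ0
  have hzmem : z ∈ Metric.ball (0:ℂ) ρ := by
    rw [Metric.mem_ball, dist_zero_right]; exact h1
  have hsum0 : Summable fun n => a n * (0:ℂ)^n := by
    refine summable_of_ne_finset_zero (s := {0}) fun n hn => ?_
    have : n ≠ 0 := by simpa using hn
    simp [zero_pow this]
  have H := hasDerivAt_tsum_of_isPreconnected hu Metric.isOpen_ball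
    (convex_ball (0:ℂ) ρ).isPreconnected hderiv hbound h0mem hsum0 hzmem
  refine H.congr_deriv ?_
  -- tsum equality
  have hgsum : Summable fun n : ℕ => a n * ((n:ℂ) * z^(n-1)) := by
    refine Summable.of_norm (Summable.of_nonneg_of_le (fun k => norm_nonneg _)
      (fun k => hbound k z hzmem) hu)
  have hinj : Function.Injective (fun k : ℕ => k + 1) := fun x y hxy => by simpa using hxy
  have hzero : ∀ x ∉ Set.range (fun k : ℕ => k + 1),
      a x * ((x:ℂ) * z^(x-1)) = 0 := by
    intro x hx
    have hx0' : x = 0 := by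
      rcases x with _ | m
      · rfl
      · exact absurd ⟨m, rfl⟩ hx
    subst hx0'; simp
  have hshift := (Function.Injective.hasSum_iff
    (f := fun n : ℕ => a n * ((n:ℂ) * z^(n-1))) hinj hzero).2 hgsum.hasSum
  refine hshift.tsum_eq.symm.trans ?_
  refine tsum_congr fun k => ?_
  simp only [Function.comp_apply, Nat.add_sub_cancel]
  push_cast
  ring

lemma hasSum_shift {a : ℕ → ℂ} {z A : ℂ} (j : ℕ) (h : HasSum (fun k => a k * z ^ k) A) :
    HasSum (fun n => (if j ≤ n then a (n - j) else 0) * z ^ n) (z ^ j * A) := by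
  have h2 := h.mul_left (z ^ j)
  refine (Function.Injective.hasSum_iff (g := fun k : ℕ => k + j)
    (add_left_injective j) ?_).1 ?_
  · intro x hx
    have hxj : x < j := by
      by_contra hc
      exact hx ⟨x - j, show x - j + j = x by omega⟩
    rw [if_neg (by omega), zero_mul]
  · refine h2.congr_fun fun k => ?_
    simp only [Function.comp_apply]
    rw [if_pos (by omega), Nat.add_sub_cancel, pow_add]
    ring

lemma hasSum_monomial (α z : ℂ) (j : ℕ) :
    HasSum (fun n : ℕ => (if n = j then α else 0) * z ^ n) (α * z ^ j) := by
  have h : (fun n : ℕ => (if n = j then α else 0) * z ^ n)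
      = fun n => if n = j then α * z ^ j else 0 := by
    funext n; by_cases hn : n = j <;> simp [hn]
  rw [h]
  exact hasSum_ite_eq j (α * z ^ j)

lemma norm_summable_of_good {a : ℕ → ℂ} {r : ℝ} (ha : Good a r) (hr : 0 < r) {z : ℂ}
    (hz : ‖z‖ < r) : Summable fun k => ‖a k * z ^ k‖ := by
  obtain ⟨ρ, h1, h2⟩ : ∃ ρ, ‖z‖ < ρ ∧ ρ < r :=
    ⟨(‖z‖ + r)/2, by have := norm_nonneg z; constructor <;> linarith⟩
  refine Summable.of_nonneg_of_le (fun k => norm_nonneg _) (fun k => ?_)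
    (ha ρ (lt_of_le_of_lt (norm_nonneg z) h1) h2)
  rw [norm_mul, norm_pow]
  exact mul_le_mul_of_nonneg_left (pow_le_pow_left₀ (norm_nonneg z) h1.le k) (norm_nonneg _)

lemma hasSum_sq {a : ℕ → ℂ} {r : ℝ} (ha : Good a r) (hr : 0 < r) {z : ℂ} (hz : ‖z‖ < r) :
    HasSum (fun m => (∑ i ∈ range (m+1), a i * a (m - i)) * z ^ m)
      ((∑' k, a k * z ^ k) ^ 2) := by
  have hnorm := norm_summable_of_good ha hr hz
  have H := (summable_norm_sum_mul_range_of_summable_norm hnorm hnorm).of_norm.hasSum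
  rw [← tsum_mul_tsum_eq_tsum_sum_range_of_summable_norm hnorm hnorm] at H
  rw [sq]
  refine H.congr_fun fun m => ?_
  rw [Finset.sum_mul]
  refine Finset.sum_congr rfl fun i hi => ?_
  have hile : i ≤ m := Nat.lt_succ_iff.mp (Finset.mem_range.mp hi)
  have hzz : z^i * z^(m-i) = z^m := by rw [← pow_add]; congr 1; omega
  calc a i * a (m-i) * z^m = a i * a (m-i) * (z^i * z^(m-i)) := by rw [hzz]
    _ = a i * z^i * (a (m-i) * z^(m-i)) := by ring

lemma coeff_eq_zero {b : ℕ → ℂ} {r : ℝ} (hr : 0 < r)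
    (h : ∀ z : ℂ, z ≠ 0 → ‖z‖ < r → HasSum (fun k => b k * z ^ k) 0) : ∀ n, b n = 0 := by
  have hgood : Good b r := by
    apply good_of_bounds
    intro ρ hρ hρr
    have hzne : ((ρ:ℂ)) ≠ 0 := by
      simpa using hρ.ne'
    have hznorm : ‖(ρ:ℂ)‖ < r := by
      rw [Complex.norm_real, Real.norm_eq_abs, abs_of_pos hρ]; exact hρr
    have hs := (h (ρ:ℂ) hzne hznorm).summable
    have htend : Filter.Tendsto (fun k => ‖b k * (ρ:ℂ)^k‖) Filter.atTop (nhds 0) := by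
      simpa using hs.tendsto_atTop_zero.norm
    obtain ⟨C, hC⟩ := htend.bddAbove_range
    refine ⟨C, fun k => ?_⟩
    have h1 : ‖b k * (ρ:ℂ)^k‖ ≤ C := hC ⟨k, rfl⟩
    have h2 : ‖b k * (ρ:ℂ)^k‖ = ‖b k‖ * ρ^k := by
      rw [norm_mul, norm_pow, Complex.norm_real, Real.norm_eq_abs, abs_of_pos hρ]
    linarith [h2 ▸ h1]
  intro n
  induction n using Nat.strong_induction_on with
  | _ n ih =>
  have hhalf : (0:ℝ) < r/2 := by linarith
  have hsummhalf : Summable fun k : ℕ => ‖b (n+1+k)‖ * (r/2)^k := by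
    have h0 := hgood (r/2) hhalf (by linarith)
    have hinj : Function.Injective (fun k : ℕ => k + (n+1)) :=
      fun p q hpq => by simpa using hpq
    have h1 : Summable ((fun k : ℕ => ‖b k‖ * (r/2)^k) ∘ (fun k : ℕ => k + (n+1))) :=
      h0.comp_injective hinj
    have h2 := h1.mul_left ((r/2)^(n+1))⁻¹
    refine h2.congr fun k => ?_
    simp only [Function.comp_apply]
    rw [pow_add]
    field_simp
    ring
  set C : ℝ := ∑' k : ℕ, ‖b (n+1+k)‖ * (r/2)^k with hCdef
  have hC0 : 0 ≤ C := tsum_nonneg fun k => by positivity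
  have key : ∀ x : ℝ, 0 < x → x ≤ r/2 → ‖b n‖ ≤ C * x := by
    intro x hx hxr
    have hxne : ((x:ℂ)) ≠ 0 := by simpa using hx.ne'
    have hxnorm : ‖(x:ℂ)‖ < r := by
      rw [Complex.norm_real, Real.norm_eq_abs, abs_of_pos hx]; linarith
    have hs := h (x:ℂ) hxne hxnorm
    have hinj : Function.Injective (fun k : ℕ => k + n) := fun p q hpq => by simpa using hpq
    have h1 : HasSum (fun k : ℕ => b (k+n) * (x:ℂ)^(k+n)) 0 := by
      have := (Function.Injective.hasSum_iff (f := fun k : ℕ => b k * (x:ℂ)^k)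
        hinj ?_).2 hs
      · exact this
      · intro m hm
        have hmn : m < n := by
          by_contra hc
          exact hm ⟨m - n, show m - n + n = m by omega⟩
        show b m * (x:ℂ)^m = 0
        rw [ih m hmn, zero_mul]
    have h2 : HasSum (fun k : ℕ => b (k+n) * (x:ℂ)^k) 0 := by
      have hxn : ((x:ℂ))^n ≠ 0 := pow_ne_zero n hxne
      have h3 : HasSum (fun k : ℕ => (x:ℂ)^n * (b (k+n) * (x:ℂ)^k)) ((x:ℂ)^n * 0) := by
        rw [mul_zero]
        refine h1.congr_fun fun k => ?_
        rw [pow_add]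
        ring
      exact (hasSum_mul_left_iff hxn).1 h3
    have hsummx : Summable fun k : ℕ => b (k+n) * (x:ℂ)^k := h2.summable
    have h4 : b n + ∑' k : ℕ, b (k+1+n) * (x:ℂ)^(k+1) = 0 := by
      have h5 := Summable.sum_add_tsum_nat_add (f := fun k : ℕ => b (k+n) * (x:ℂ)^k) 1 hsummx
      rw [h2.tsum_eq] at h5
      simpa using h5
    have h6 : ‖b n‖ = ‖∑' k : ℕ, b (k+1+n) * (x:ℂ)^(k+1)‖ := by
      have : b n = -(∑' k : ℕ, b (k+1+n) * (x:ℂ)^(k+1)) := by linear_combination h4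
      rw [this, norm_neg]
    have hsumnorm : Summable fun k : ℕ => ‖b (k+1+n) * (x:ℂ)^(k+1)‖ := by
      refine Summable.of_nonneg_of_le (fun k => norm_nonneg _) (fun k => ?_)
        (hsummhalf.mul_right x)
      rw [norm_mul, norm_pow, Complex.norm_real, Real.norm_eq_abs, abs_of_pos hx,
        pow_succ]
      rw [show k+1+n = n+1+k by omega]
      have hxk : x^k ≤ (r/2)^k := pow_le_pow_left₀ hx.le hxr k
      have hle : ‖b (n+1+k)‖ * x^k ≤ ‖b (n+1+k)‖ * (r/2)^k :=
        mul_le_mul_of_nonneg_left hxk (norm_nonneg _)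
      calc ‖b (n+1+k)‖ * (x^k * x) = (‖b (n+1+k)‖ * x^k) * x := by ring
        _ ≤ (‖b (n+1+k)‖ * (r/2)^k) * x := mul_le_mul_of_nonneg_right hle hx.le
    calc ‖b n‖ = ‖∑' k : ℕ, b (k+1+n) * (x:ℂ)^(k+1)‖ := h6
      _ ≤ ∑' k : ℕ, ‖b (k+1+n) * (x:ℂ)^(k+1)‖ := norm_tsum_le_tsum_norm hsumnorm
      _ ≤ ∑' k : ℕ, ‖b (n+1+k)‖ * (r/2)^k * x := by
          refine Summable.tsum_le_tsum (fun k => ?_) hsumnorm (hsummhalf.mul_right x)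
          rw [norm_mul, norm_pow, Complex.norm_real, Real.norm_eq_abs, abs_of_pos hx,
            pow_succ]
          rw [show k+1+n = n+1+k by omega]
          have hxk : x^k ≤ (r/2)^k := pow_le_pow_left₀ hx.le hxr k
          have hle : ‖b (n+1+k)‖ * x^k ≤ ‖b (n+1+k)‖ * (r/2)^k :=
            mul_le_mul_of_nonneg_left hxk (norm_nonneg _)
          calc ‖b (n+1+k)‖ * (x^k * x) = (‖b (n+1+k)‖ * x^k) * x := by ring
            _ ≤ (‖b (n+1+k)‖ * (r/2)^k) * x := mul_le_mul_of_nonneg_right hle hx.le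
      _ = C * x := by rw [hCdef, ← tsum_mul_right]
  by_contra hbn
  have hpos : 0 < ‖b n‖ := norm_pos_iff.mpr hbn
  set x : ℝ := min (r/2) (‖b n‖/(2*(C+1))) with hxdef
  have hx0 : 0 < x := lt_min hhalf (div_pos hpos (by positivity))
  have hx1 : x ≤ r/2 := min_le_left _ _
  have hx2 : x ≤ ‖b n‖/(2*(C+1)) := min_le_right _ _
  have := key x hx0 hx1
  have hlt : C * x < ‖b n‖ := by
    have hCx : C * x ≤ C * (‖b n‖/(2*(C+1))) := mul_le_mul_of_nonneg_left hx2 hC0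
    have hfrac : C / (2*(C+1)) < 1 := (div_lt_one (by positivity)).mpr (by linarith)
    have hlt2 : C * (‖b n‖/(2*(C+1))) < ‖b n‖ := by
      calc C * (‖b n‖/(2*(C+1))) = ‖b n‖ * (C/(2*(C+1))) := by ring
        _ < ‖b n‖ * 1 := mul_lt_mul_of_pos_left hfrac hpos
        _ = ‖b n‖ := mul_one _
    linarith
  linarith

lemma good_of_summable {a : ℕ → ℂ} {r : ℝ}
    (h : ∀ z : ℂ, z ≠ 0 → ‖z‖ < r → Summable fun k => a k * z ^ k) : Good a r := by
  apply good_of_bounds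
  intro ρ hρ hρr
  have hzne : ((ρ:ℂ)) ≠ 0 := by simpa using hρ.ne'
  have hznorm : ‖(ρ:ℂ)‖ < r := by
    rw [Complex.norm_real, Real.norm_eq_abs, abs_of_pos hρ]; exact hρr
  have hs := h (ρ:ℂ) hzne hznorm
  have htend : Filter.Tendsto (fun k => ‖a k * (ρ:ℂ)^k‖) Filter.atTop (nhds 0) := by
    simpa using hs.tendsto_atTop_zero.norm
  obtain ⟨C, hC⟩ := htend.bddAbove_range
  refine ⟨C, fun k => ?_⟩
  have h1 : ‖a k * (ρ:ℂ)^k‖ ≤ C := hC ⟨k, rfl⟩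
  have h2 : ‖a k * (ρ:ℂ)^k‖ = ‖a k‖ * ρ^k := by
    rw [norm_mul, norm_pow, Complex.norm_real, Real.norm_eq_abs, abs_of_pos hρ]
  linarith [h2 ▸ h1]

end PIaux

open PIaux in
/-- Movable double poles of Painlevé I: if a solution of w'' = 6w² + t on a
punctured disc around t₀ is given there by a convergent Laurent series with a
pole at t₀ (of order N ≥ 1), then N = 2 and the expansion begins
w(t) = (t−t₀)⁻² + 0·(t−t₀)⁻¹ + 0 + 0·(t−t₀) − (t₀/10)(t−t₀)² + ⋯ . -/
theorem stmt11 (t₀ : ℂ) (r : ℝ) (hr : 0 < r) (w dw : ℂ → ℂ)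
    (c : ℤ → ℂ) (N : ℤ) (hN : 0 < N)
    (hlead : c (-N) ≠ 0)
    (hvanish : ∀ n : ℤ, n < -N → c n = 0)
    (hsum : ∀ t ∈ Metric.ball t₀ r \ {t₀},
      HasSum (fun n : ℤ => c n * (t - t₀) ^ n) (w t))
    (hw : ∀ t ∈ Metric.ball t₀ r \ {t₀}, HasDerivAt w (dw t) t)
    (hdw : ∀ t ∈ Metric.ball t₀ r \ {t₀},
      HasDerivAt dw (6 * (w t) ^ 2 + t) t) :
    N = 2 ∧ c (-2) = 1 ∧ c (-1) = 0 ∧ c 0 = 0 ∧ c 1 = 0 ∧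
      c 2 = -t₀ / 10 := by
  lift N to ℕ using hN.le with M hM
  have hM1 : 1 ≤ M := by exact_mod_cast hN
  set p : ℕ → ℂ := fun k => c ((k : ℤ) - M) with hpdef
  set q : ℕ → ℂ := fun k => ((k:ℂ)+1) * p (k+1) with hqdef
  set s : ℕ → ℂ := fun k => ((k:ℂ)+1) * q (k+1) with hsdef
  have hmem : ∀ z : ℂ, z ≠ 0 → ‖z‖ < r → (t₀ + z) ∈ Metric.ball t₀ r \ {t₀} := by
    intro z hz hzr
    constructor
    · rw [Metric.mem_ball, Complex.dist_eq, add_sub_cancel_left]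
      exact hzr
    · simp [hz]
  have hA : ∀ z : ℂ, z ≠ 0 → ‖z‖ < r →
      HasSum (fun k : ℕ => p k * z ^ k) (z ^ M * w (t₀ + z)) := by
    intro z hz hzr
    have h0 := hsum (t₀ + z) (hmem z hz hzr)
    rw [add_sub_cancel_left] at h0
    have h1 := h0.mul_left (z ^ M)
    have hinj : Function.Injective (fun k : ℕ => (k : ℤ) - M) := by
      intro a b hab
      simp only at hab
      omega
    have hout : ∀ m : ℤ, m ∉ Set.range (fun k : ℕ => (k : ℤ) - M) →
        z ^ (M:ℤ) * (c m * z ^ m) = 0 := by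
      intro m hm
      have hlt : m < -(M:ℤ) := by
        by_contra hc
        push_neg at hc
        exact hm ⟨(m + M).toNat, show ((m + (M:ℤ)).toNat : ℤ) - M = m by omega⟩
      rw [hvanish m hlt, zero_mul, mul_zero]
    have h2 := (Function.Injective.hasSum_iff
      (f := fun n : ℤ => z ^ (M:ℤ) * (c n * z ^ n)) hinj hout).2 (by
        refine h1.congr_fun fun n => ?_
        rw [zpow_natCast])
    refine h2.congr_fun fun k => ?_
    simp only [Function.comp_apply]
    rw [zpow_sub₀ hz, zpow_natCast, zpow_natCast]
    field_simp
    rfl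
  have hgoodp : Good p r := good_of_summable fun z hz hzr => (hA z hz hzr).summable
  have hgoodq : Good q r := hgoodp.deriv hr
  have hgoods : Good s r := hgoodq.deriv hr
  have hωopen : IsOpen {z : ℂ | z ≠ 0 ∧ ‖z‖ < r} :=
    isOpen_ne.inter (isOpen_lt continuous_norm continuous_const)
  have hWd : ∀ z : ℂ, z ≠ 0 → ‖z‖ < r →
      HasDerivAt (fun y => w (t₀ + y)) (dw (t₀ + z)) z := by
    intro z hz hzr
    have h0 := hw (t₀ + z) (hmem z hz hzr)
    have h1 := HasDerivAt.comp z h0 ((hasDerivAt_id z).const_add t₀)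
    simpa [Function.comp_def] using h1
  have hW1d : ∀ z : ℂ, z ≠ 0 → ‖z‖ < r →
      HasDerivAt (fun y => dw (t₀ + y)) (6 * (w (t₀ + z))^2 + (t₀ + z)) z := by
    intro z hz hzr
    have h0 := hdw (t₀ + z) (hmem z hz hzr)
    have h1 := HasDerivAt.comp z h0 ((hasDerivAt_id z).const_add t₀)
    simpa [Function.comp_def] using h1
  have hEq : ∀ z : ℂ, z ≠ 0 → ‖z‖ < r →
      (∑' (k:ℕ), p k * z ^ k) = z ^ M * w (t₀ + z) :=
    fun z hz hzr => (hA z hz hzr).tsum_eq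
  have hqsum : ∀ z : ℂ, ‖z‖ < r →
      HasDerivAt (fun y => ∑' (k:ℕ), p k * y ^ k) (∑' (k:ℕ), q k * z ^ k) z := by
    intro z hzr
    have hval : (∑' (k:ℕ), q k * z ^ k)
        = ∑' (k:ℕ), ((k:ℂ) + 1) * p (k + 1) * z ^ k :=
      tsum_congr fun k => by rw [hqdef]
    rw [hval]
    exact hasDerivAt_psum hr hgoodp hzr
  have hssum : ∀ z : ℂ, ‖z‖ < r →
      HasDerivAt (fun y => ∑' (k:ℕ), q k * y ^ k) (∑' (k:ℕ), s k * z ^ k) z := by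
    intro z hzr
    have hval : (∑' (k:ℕ), s k * z ^ k)
        = ∑' (k:ℕ), ((k:ℂ) + 1) * q (k + 1) * z ^ k :=
      tsum_congr fun k => by rw [hsdef]
    rw [hval]
    exact hasDerivAt_psum hr hgoodq hzr
  have hF1 : ∀ z : ℂ, z ≠ 0 → ‖z‖ < r →
      (∑' (k:ℕ), q k * z ^ k)
        = (M:ℂ) * z ^ (M-1) * w (t₀ + z) + z ^ M * dw (t₀ + z) := by
    intro z hz hzr
    have hev : (fun y => ∑' (k:ℕ), p k * y ^ k) =ᶠ[nhds z]
        (fun y => y ^ M * w (t₀ + y)) := by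
      filter_upwards [hωopen.mem_nhds (⟨hz, hzr⟩ : z ∈ {z : ℂ | z ≠ 0 ∧ ‖z‖ < r})]
        with y hy
      exact hEq y hy.1 hy.2
    have d2 : HasDerivAt (fun y => y ^ M * w (t₀ + y))
        ((M:ℂ) * z ^ (M-1) * w (t₀ + z) + z ^ M * dw (t₀ + z)) z :=
      (hasDerivAt_pow M z).mul (hWd z hz hzr)
    exact ((hqsum z hzr).congr_of_eventuallyEq hev.symm).unique d2
  have hF2 : ∀ z : ℂ, z ≠ 0 → ‖z‖ < r →
      (∑' (k:ℕ), s k * z ^ k)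
        = ((M:ℂ) * (((M-1 : ℕ):ℂ) * z^(M-1-1))) * w (t₀+z)
          + ((M:ℂ) * z^(M-1)) * dw (t₀+z)
          + (((M:ℕ):ℂ) * z^(M-1) * dw (t₀+z)
            + z^M * (6 * (w (t₀+z))^2 + (t₀+z))) := by
    intro z hz hzr
    have hev : (fun y => ∑' (k:ℕ), q k * y ^ k) =ᶠ[nhds z]
        (fun y => (M:ℂ) * y ^ (M-1) * w (t₀ + y) + y ^ M * dw (t₀ + y)) := by
      filter_upwards [hωopen.mem_nhds (⟨hz, hzr⟩ : z ∈ {z : ℂ | z ≠ 0 ∧ ‖z‖ < r})]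
        with y hy
      exact hF1 y hy.1 hy.2
    have dA : HasDerivAt (fun y => (M:ℂ) * y ^ (M-1) * w (t₀ + y))
        (((M:ℂ) * (((M-1 : ℕ):ℂ) * z^(M-1-1))) * w (t₀+z)
          + ((M:ℂ) * z^(M-1)) * dw (t₀+z)) z :=
      ((hasDerivAt_pow (M-1) z).const_mul (M:ℂ)).mul (hWd z hz hzr)
    have dB : HasDerivAt (fun y => y ^ M * dw (t₀ + y))
        (((M:ℕ):ℂ) * z^(M-1) * dw (t₀+z)
          + z^M * (6 * (w (t₀+z))^2 + (t₀+z))) z :=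
      (hasDerivAt_pow M z).mul (hW1d z hz hzr)
    exact ((hssum z hzr).congr_of_eventuallyEq hev.symm).unique (dA.add dB)
  have hkey : ∀ z : ℂ, z ≠ 0 → ‖z‖ < r →
      z^(M+2) * (∑' (k:ℕ), s k * z^k)
        = ((M:ℂ)*((M:ℂ)-1) - 2*(M:ℂ)^2) * (z^M * (∑' (k:ℕ), p k * z^k))
          + 2*(M:ℂ) * (z^(M+1) * (∑' (k:ℕ), q k * z^k))
          + 6 * (z^2 * (∑' (k:ℕ), p k * z^k)^2)
          + t₀ * z^(2*M+2) + z^(2*M+3) := by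
    intro z hz hzr
    have e0 := hEq z hz hzr
    have e1 := hF1 z hz hzr
    have e2 := hF2 z hz hzr
    obtain ⟨M', rfl⟩ : ∃ M', M = M' + 1 := ⟨M - 1, by omega⟩
    simp only [Nat.add_sub_cancel] at e1 e2 ⊢
    rw [e0, e1, e2]
    rcases Nat.eq_zero_or_pos M' with hM0 | hMpos
    · subst hM0
      push_cast
      ring
    · obtain ⟨M'', rfl⟩ : ∃ M'', M' = M'' + 1 := ⟨M' - 1, by omega⟩
      simp only [Nat.add_sub_cancel]
      push_cast
      ring
  set pp : ℕ → ℂ := fun m => ∑ i ∈ Finset.range (m+1), p i * p (m-i) with hppdef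
  set D : ℕ → ℂ := fun n =>
    (if M+2 ≤ n then s (n-(M+2)) else 0)
    - ((M:ℂ)*((M:ℂ)-1) - 2*(M:ℂ)^2) * (if M ≤ n then p (n-M) else 0)
    - 2*(M:ℂ) * (if M+1 ≤ n then q (n-(M+1)) else 0)
    - 6 * (if 2 ≤ n then pp (n-2) else 0)
    - (if n = 2*M+2 then t₀ else 0)
    - (if n = 2*M+3 then (1:ℂ) else 0) with hDdef
  have hD0 : ∀ n, D n = 0 := by
    refine coeff_eq_zero hr ?_
    intro z hz hzr
    have T1 := hasSum_shift (M+2) ((hgoods.summable hr hzr).hasSum)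
    have T2 := hasSum_shift M ((hgoodp.summable hr hzr).hasSum)
    have T3 := hasSum_shift (M+1) ((hgoodq.summable hr hzr).hasSum)
    have T4 := hasSum_shift 2 (hasSum_sq hgoodp hr hzr)
    have T5 := hasSum_monomial t₀ z (2*M+2)
    have T6 := hasSum_monomial 1 z (2*M+3)
    have Hfin := ((((T1.sub (T2.mul_left ((M:ℂ)*((M:ℂ)-1) - 2*(M:ℂ)^2))).sub
      (T3.mul_left (2*(M:ℂ)))).sub (T4.mul_left 6)).sub T5).sub T6
    have hval : z^(M+2) * (∑' (k:ℕ), s k * z^k)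
        - ((M:ℂ)*((M:ℂ)-1) - 2*(M:ℂ)^2) * (z^M * (∑' (k:ℕ), p k * z^k))
        - 2*(M:ℂ) * (z^(M+1) * (∑' (k:ℕ), q k * z^k))
        - 6 * (z^2 * (∑' (k:ℕ), p k * z^k)^2)
        - t₀ * z^(2*M+2) - 1 * z^(2*M+3) = 0 := by
      linear_combination hkey z hz hzr
    rw [hval] at Hfin
    refine Hfin.congr_fun fun n => ?_
    simp only [hDdef]
    ring
  have hp0 : p 0 ≠ 0 := by
    simpa [hpdef] using hlead
  have hM2 : M = 2 := by
    by_contra hMne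
    have e2 := hD0 2
    simp only [hDdef] at e2
    rcases (show M = 1 ∨ 3 ≤ M from by omega) with h1 | h3
    · subst h1
      norm_num [hqdef, hsdef, hppdef, Finset.sum_range_succ] at e2
      exact hp0 e2
    · have c1 : ¬ (M + 2 ≤ 2) := by omega
      have c2 : ¬ (M ≤ 2) := by omega
      have c3 : ¬ (M + 1 ≤ 2) := by omega
      have c4 : ¬ (2 = 2*M+2) := by omega
      have c5 : ¬ (2 = 2*M+3) := by omega
      rw [if_neg c1, if_neg c2, if_neg c3, if_neg c4, if_neg c5, if_pos (le_refl 2)] at e2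
      norm_num [hppdef, Finset.sum_range_succ] at e2
      exact hp0 e2
  subst hM2
  have e2 := hD0 2
  have e3 := hD0 3
  have e4 := hD0 4
  have e5 := hD0 5
  have e6 := hD0 6
  simp only [hDdef] at e2 e3 e4 e5 e6
  norm_num [hqdef, hsdef, hppdef, Finset.sum_range_succ] at e2 e3 e4 e5 e6
  have hp0v : p 0 = 1 := by
    rcases mul_eq_zero.1 (show p 0 * (p 0 - 1) = 0 from by linear_combination (-(1:ℂ)/6) * e2) with h | h
    · exact absurd h hp0
    · exact sub_eq_zero.1 h
  rw [hp0v] at e3 e4 e5 e6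
  have hp1v : p 1 = 0 := by linear_combination (-(1:ℂ)/10) * e3
  rw [hp1v] at e4 e5 e6
  have hp2v : p 2 = 0 := by linear_combination (-(1:ℂ)/12) * e4
  rw [hp2v] at e5 e6
  have hp3v : p 3 = 0 := by linear_combination (-(1:ℂ)/12) * e5
  rw [hp3v] at e6
  have hp4v : p 4 = -t₀/10 := by linear_combination (-(1:ℂ)/10) * e6
  refine ⟨by norm_num, ?_, ?_, ?_, ?_, ?_⟩
  · have h := hp0v; rw [hpdef] at h; norm_num at h; exact h
  · have h := hp1v; rw [hpdef] at h; norm_num at h; exact h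
  · have h := hp2v; rw [hpdef] at h; norm_num at h; exact h
  · have h := hp3v; rw [hpdef] at h; norm_num at h; exact h
  · have h := hp4v; rw [hpdef] at h; norm_num at h; exact h
end
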